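/- Let p_1, …, p_r and p be pairwise distinct primes, let 1 ≤ s ≤ r with 3r ≥ 8s + 5, and let n = p_1^2·p_2^2···p_s^2·p_{s+1}···p_r. Then H(n·p^2) − H(n·p) < 0, i.e. H(n·p^2) < H(n·p). -/

import Mathlib

open Finset

/-- The entropy of a positive integer `n ≥ 2` with prime factorization
`n = p_1^{α_1} ⋯ p_r^{α_r}`: `H(n) = log Ω(n) − (1/Ω(n)) ∑ α_i log α_i`,
where `Ω(n)` counts prime factors with multiplicity. -/
noncomputable def numEntropy (n : ℕ) : ℝ :=
  Real.log (n.primeFactorsList.length : ℝ) -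
    (1 / (n.primeFactorsList.length : ℝ)) *
      ∑ p ∈ n.primeFactors, (n.factorization p : ℝ) * Real.log (n.factorization p)

private lemma omega_prod {ι : Type*} (S : Finset ι) (f : ι → ℕ)
    (h : ∀ i ∈ S, f i ≠ 0) :
    ArithmeticFunction.cardFactors (∏ i ∈ S, f i) =
      ∑ i ∈ S, ArithmeticFunction.cardFactors (f i) := by
  classical
  induction S using Finset.induction with
  | empty => simp
  | @insert a s ha ih =>
    rw [Finset.prod_insert ha, Finset.sum_insert ha,
      ArithmeticFunction.cardFactors_mul (h a (mem_insert_self a s))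
        (Finset.prod_ne_zero_iff.2 fun i hi => h i (mem_insert_of_mem hi)),
      ih fun i hi => h i (mem_insert_of_mem hi)]

/-- Key computation: for `N = n * p ^ k` as in the theorem, compute the
length and the entropy sum. -/
private lemma key_comp
    (r s : ℕ) (hsr : s ≤ r)
    (ps : Fin r → ℕ) (hps : ∀ i, (ps i).Prime) (hinj : Function.Injective ps)
    (p : ℕ) (hp : p.Prime) (hpne : ∀ i, ps i ≠ p)
    (n : ℕ) (hn : n = ∏ i : Fin r, ps i ^ (if (i : ℕ) < s then 2 else 1))
    (k : ℕ) (hk : k ≠ 0) :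
    ((n * p ^ k).primeFactorsList.length = r + s + k) ∧
    (∑ q ∈ (n * p ^ k).primeFactors,
        ((n * p ^ k).factorization q : ℝ) * Real.log ((n * p ^ k).factorization q)
      = s * (2 * Real.log 2) + k * Real.log k) := by
  classical
  have hne : ∀ i ∈ (univ : Finset (Fin r)), ps i ^ (if (i : ℕ) < s then 2 else 1) ≠ 0 :=
    fun i _ => pow_ne_zero _ (hps i).pos.ne'
  have hn0 : n ≠ 0 := by
    rw [hn]; exact Finset.prod_ne_zero_iff.2 hne
  have hpk0 : p ^ k ≠ 0 := pow_ne_zero _ hp.pos.ne'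
  have hfi : (Finset.range r).filter (fun i => i < s) = Finset.range s := by
    ext i; simp only [Finset.mem_filter, Finset.mem_range]; omega
  constructor
  · -- length
    have h1 : (n * p ^ k).primeFactorsList.length =
        ArithmeticFunction.cardFactors (n * p ^ k) := rfl
    rw [h1, ArithmeticFunction.cardFactors_mul hn0 hpk0,
      ArithmeticFunction.cardFactors_apply_prime_pow hp, hn,
      omega_prod _ _ hne]
    have h2 : ∀ i : Fin r, ArithmeticFunction.cardFactors
        (ps i ^ (if (i : ℕ) < s then 2 else 1)) = (if (i : ℕ) < s then 2 else 1) :=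
      fun i => ArithmeticFunction.cardFactors_apply_prime_pow (hps i)
    simp only [h2]
    rw [Fin.sum_univ_eq_sum_range (fun i => if i < s then 2 else 1) r]
    have h3 : ∀ i ∈ Finset.range r, (if i < s then 2 else 1) = 1 + (if i < s then 1 else 0) := by
      intro i _; split <;> rfl
    rw [Finset.sum_congr rfl h3, Finset.sum_add_distrib, Finset.sum_const,
      ← Finset.sum_filter, hfi]
    simp only [Finset.card_range, smul_eq_mul, mul_one, Finset.sum_const]
  · -- the sum
    have hfacn : n.factorization =
        ∑ i : Fin r, Finsupp.single (ps i) (if (i : ℕ) < s then 2 else 1) := by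
      rw [hn, Nat.factorization_prod hne]
      exact Finset.sum_congr rfl fun i _ => Nat.Prime.factorization_pow (hps i)
    have hfacN : (n * p ^ k).factorization =
        (∑ i : Fin r, Finsupp.single (ps i) (if (i : ℕ) < s then 2 else 1))
          + Finsupp.single p k := by
      rw [Nat.factorization_mul hn0 hpk0, hfacn, Nat.Prime.factorization_pow hp]
    have hval_ps : ∀ j : Fin r, (n * p ^ k).factorization (ps j) =
        (if (j : ℕ) < s then 2 else 1) := by
      intro j
      rw [hfacN, Finsupp.add_apply, Finsupp.finset_sum_apply]
      have hz : (Finsupp.single p k) (ps j) = 0 :=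
        Finsupp.single_eq_of_ne' (fun h => hpne j h.symm)
      rw [hz, add_zero,
        Finset.sum_eq_single j
          (fun i _ hij => Finsupp.single_eq_of_ne' (fun h => hij (hinj h)))
          (fun h => absurd (Finset.mem_univ j) h)]
      exact Finsupp.single_eq_same
    have hval_p : (n * p ^ k).factorization p = k := by
      rw [hfacN, Finsupp.add_apply, Finsupp.finset_sum_apply,
        Finset.sum_eq_zero (fun i _ => Finsupp.single_eq_of_ne' (hpne i)), zero_add,
        Finsupp.single_eq_same]
    have hsupp : (n * p ^ k).primeFactors =
        insert p (Finset.image ps Finset.univ) := by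
      rw [Nat.primeFactors_mul hn0 hpk0, Nat.primeFactors_prime_pow hk hp,
        Finset.union_comm, ← Finset.insert_eq]
      congr 1
      ext q
      simp only [Nat.mem_primeFactors, Finset.mem_image, Finset.mem_univ, true_and]
      constructor
      · rintro ⟨hq, hdvd, -⟩
        rw [hn] at hdvd
        obtain ⟨i, -, hi⟩ := hq.prime.exists_mem_finset_dvd hdvd
        exact ⟨i, ((Nat.prime_dvd_prime_iff_eq hq (hps i)).1
          (Nat.Prime.dvd_of_dvd_pow hq hi)).symm⟩
      · rintro ⟨i, rfl⟩
        refine ⟨hps i, ?_, hn0⟩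
        rw [hn]
        exact dvd_trans (dvd_pow_self _ (by split <;> omega))
          (Finset.dvd_prod_of_mem _ (Finset.mem_univ i))
    have hpnot : p ∉ Finset.image ps Finset.univ := by
      simp only [Finset.mem_image, Finset.mem_univ, true_and, not_exists]
      exact fun i => hpne i
    rw [hsupp, Finset.sum_insert hpnot,
      Finset.sum_image (fun i _ j _ h => hinj h), hval_p]
    have h4 : ∀ i : Fin r,
        (((n * p ^ k).factorization (ps i) : ℝ)) *
          Real.log ((n * p ^ k).factorization (ps i))
        = if (i : ℕ) < s then 2 * Real.log 2 else 0 := by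
      intro i
      rw [hval_ps i]
      split <;> norm_num
    rw [Finset.sum_congr rfl fun i _ => h4 i]
    rw [Fin.sum_univ_eq_sum_range (fun i => if i < s then 2 * Real.log 2 else 0) r,
      ← Finset.sum_filter, hfi, Finset.sum_const, Finset.card_range]
    rw [nsmul_eq_mul]
    ring

theorem entropy_np_sq_lt_entropy_np
    (r s : ℕ) (hs : 1 ≤ s) (hsr : s ≤ r) (hr : 8 * s + 5 ≤ 3 * r)
    (ps : Fin r → ℕ) (hps : ∀ i, (ps i).Prime) (hinj : Function.Injective ps)
    (p : ℕ) (hp : p.Prime) (hpne : ∀ i, ps i ≠ p)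
    (n : ℕ) (hn : n = ∏ i : Fin r, ps i ^ (if (i : ℕ) < s then 2 else 1)) :
    numEntropy (n * p ^ 2) < numEntropy (n * p) := by
  obtain ⟨hl1, hs1⟩ := key_comp r s hsr ps hps hinj p hp hpne n hn 1 one_ne_zero
  obtain ⟨hl2, hs2⟩ := key_comp r s hsr ps hps hinj p hp hpne n hn 2 two_ne_zero
  rw [pow_one] at hl1 hs1
  rw [numEntropy, numEntropy, hl1, hl2, hs1, hs2]
  norm_num
  set M : ℝ := (r : ℝ) + s + 1 with hM
  have hrep : (r:ℝ) + (s:ℝ) + 2 = M + 1 := by rw [hM]; ring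
  rw [hrep]
  simp only [inv_eq_one_div]
  have hMpos : (0:ℝ) < M := by positivity
  have hM1pos : (0:ℝ) < M + 1 := by linarith
  have hlog2 : (0.6931471803:ℝ) < Real.log 2 := Real.log_two_gt_d9
  have key : Real.log (M + 1) - Real.log M < 1 / M := by
    have h0 : (0:ℝ) < (M + 1) / M := by positivity
    have h1 : (M + 1) / M ≠ 1 := by
      intro h
      rw [div_eq_one_iff_eq (ne_of_gt hMpos)] at h
      linarith
    have h2 := Real.log_lt_sub_one_of_pos h0 h1
    rw [Real.log_div (by linarith) (ne_of_gt hMpos)] at h2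
    have h3 : (M + 1) / M - 1 = 1 / M := by field_simp; ring
    linarith [h3 ▸ h2]
  have hrr : (8:ℝ) * s + 5 ≤ 3 * r := by exact_mod_cast hr
  set L : ℝ := Real.log 2 with hL
  have h2 : 1 / M + (1 / M) * ((s:ℝ) * (2 * L)) ≤
      (1 / (M + 1)) * ((s:ℝ) * (2 * L) + 2 * L) := by
    rw [div_mul_eq_mul_div, div_mul_eq_mul_div, one_mul, one_mul, ← add_div,
      div_le_div_iff₀ hMpos hM1pos]
    have hprod : (0:ℝ) ≤ (16 * L - 11) * ((r:ℝ) + 1) :=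
      mul_nonneg (by linarith) (by positivity)
    nlinarith [hprod, hMpos]
  linarith [key, h2]
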